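/- Let 𝒳, 𝒴 be finite sets, (X,Y) with joint probability mass function p on 𝒳 × 𝒴, r(·|·) a conditional probability mass function on 𝒴 given 𝒳 with r(y|x) > 0 whenever p(x,y) > 0, Ω a finite set, P1 and P2 probability mass functions on Ω, and μ ∈ (0,1). If sup over D : Ω → (0,1) of [(1−μ)·L_f(r) − μ·(Σ_ω P1(ω)(−log D(ω)) + Σ_ω P2(ω)(−log(1−D(ω))))] = (1−μ)·H(Y|X) − μ·log 4, where L_f(r) = Σ_{x,y} p(x,y)(−log r(y|x)), then: (a) L_f(r) = H(Y|X), so r(y|x) = P(Y=y|X=x) whenever P(X=x) > 0 (i.e., the predictor is optimal); and (b) P1 = P2. -/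

import Mathlib

/-- Kullback–Leibler divergence between pmfs on a finite set. -/
noncomputable def KLdiv {Ω : Type*} [Fintype Ω] (p q : Ω → ℝ) : ℝ :=
  ∑ ω, p ω * Real.log (p ω / q ω)

/-- Jensen–Shannon divergence: `JSD(p‖q) = ½ KL(p‖m) + ½ KL(q‖m)` with `m = (p+q)/2`. -/
noncomputable def JSD {Ω : Type*} [Fintype Ω] (p q : Ω → ℝ) : ℝ :=
  KLdiv p (fun ω => (p ω + q ω) / 2) / 2 + KLdiv q (fun ω => (p ω + q ω) / 2) / 2

/-- The cross-entropy discriminator loss. -/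
noncomputable def discLoss {Ω : Type*} [Fintype Ω] (p q D : Ω → ℝ) : ℝ :=
  ∑ ω, p ω * (-Real.log (D ω)) + ∑ ω, q ω * (-Real.log (1 - D ω))

/-- The expected negative log-likelihood loss `L_f(r) = ∑_{x,y} p(x,y)(−log r(y|x))`. -/
noncomputable def nllLoss {𝒳 𝒴 : Type*} [Fintype 𝒳] [Fintype 𝒴] (p r : 𝒳 → 𝒴 → ℝ) : ℝ :=
  ∑ x, ∑ y, p x y * (-Real.log (r x y))

/-- The conditional entropy `H(Y|X) = ∑_{x,y} p(x,y)(−log p(y|x))`. -/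
noncomputable def condEnt {𝒳 𝒴 : Type*} [Fintype 𝒳] [Fintype 𝒴] (p : 𝒳 → 𝒴 → ℝ) : ℝ :=
  ∑ x, ∑ y, p x y * (-Real.log (p x y / ∑ y', p x y'))

/-- Theorem 2.2, discrete form: if the minimax adversarial value
`(1−μ)H(Y|X) − μ·log 4` is attained, i.e.
`sup_D [(1−μ)L_f(r) − μ·L_d(D)] = (1−μ)H(Y|X) − μ·log 4` with `μ ∈ (0,1)`, then
(a) `L_f(r) = H(Y|X)`, so `r(y|x) = P(Y=y|X=x)` whenever `P(X=x) > 0`, and (b) `P1 = P2`. -/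


lemma klterm_ge (a b : ℝ) (ha : 0 ≤ a) (hb : 0 ≤ b) (hab : 0 < a → 0 < b) :
    a - b ≤ a * Real.log (a / b) := by
  rcases eq_or_lt_of_le ha with h | h
  · simp [← h]; linarith
  · have hb' := hab h
    have hx : (0:ℝ) < b / a := div_pos hb' h
    have hlog : Real.log (a / b) = - Real.log (b / a) := by
      rw [← Real.log_inv]; congr 1; field_simp
    have h1 : Real.log (b/a) ≤ b/a - 1 := Real.log_le_sub_one_of_pos hx
    have h2 : a * Real.log (b/a) ≤ a * (b/a - 1) := mul_le_mul_of_nonneg_left h1 ha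
    have hba : a * (b/a) = b := by field_simp
    rw [hlog]
    nlinarith

lemma klterm_eq (a b : ℝ) (ha : 0 ≤ a) (hb : 0 ≤ b) (hab : 0 < a → 0 < b)
    (h : a * Real.log (a / b) = a - b) : a = b := by
  rcases eq_or_lt_of_le ha with h0 | h0
  · rw [← h0] at h ⊢; simp at h; linarith
  · have hb' := hab h0
    by_contra hne
    have hx : (0:ℝ) < b / a := div_pos hb' h0
    have hne1 : b / a ≠ 1 := by
      intro h1
      rw [div_eq_one_iff_eq (ne_of_gt h0)] at h1
      exact hne h1.symm
    have h1 := Real.log_lt_sub_one_of_pos hx hne1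
    have hlog : Real.log (a / b) = - Real.log (b / a) := by
      rw [← Real.log_inv]; congr 1; field_simp
    have h2 : a * Real.log (b/a) < a * (b/a - 1) := by
      exact mul_lt_mul_of_pos_left h1 h0
    have hba : a * (b/a) = b := by field_simp
    rw [hlog] at h
    nlinarith

lemma kl_sum_nonneg {ι : Type*} [Fintype ι] (f g : ι → ℝ) (hf : ∀ i, 0 ≤ f i)
    (hg : ∀ i, 0 ≤ g i) (hfg : ∀ i, 0 < f i → 0 < g i)
    (hsum : ∑ i, g i ≤ ∑ i, f i) :
    0 ≤ ∑ i, f i * Real.log (f i / g i) := by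
  have h : ∑ i, (f i - g i) ≤ ∑ i, f i * Real.log (f i / g i) :=
    Finset.sum_le_sum fun i _ => klterm_ge _ _ (hf i) (hg i) (hfg i)
  rw [Finset.sum_sub_distrib] at h
  linarith

lemma kl_sum_eq {ι : Type*} [Fintype ι] (f g : ι → ℝ) (hf : ∀ i, 0 ≤ f i)
    (hg : ∀ i, 0 ≤ g i) (hfg : ∀ i, 0 < f i → 0 < g i)
    (hsum : ∑ i, f i = ∑ i, g i)
    (h0 : ∑ i, f i * Real.log (f i / g i) = 0) : ∀ i, f i = g i := by
  have key : ∀ i ∈ Finset.univ, (0:ℝ) ≤ f i * Real.log (f i / g i) - (f i - g i) := by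
    intro i _
    have := klterm_ge (f i) (g i) (hf i) (hg i) (hfg i); linarith
  have hsum0 : ∑ i, (f i * Real.log (f i / g i) - (f i - g i)) = 0 := by
    rw [Finset.sum_sub_distrib, Finset.sum_sub_distrib, h0, hsum]; ring
  have hz := (Finset.sum_eq_zero_iff_of_nonneg key).mp hsum0
  intro i
  have hi := hz i (Finset.mem_univ i)
  exact klterm_eq _ _ (hf i) (hg i) (hfg i) (by linarith)

lemma disc_point (a b t : ℝ) (ha : 0 ≤ a) (hb : 0 ≤ b) (ht : t ∈ Set.Ioo (0:ℝ) 1) :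
    a * (-Real.log (a / (a + b))) + b * (-Real.log (b / (a + b)))
      ≤ a * (-Real.log t) + b * (-Real.log (1 - t)) := by
  obtain ⟨ht0, ht1⟩ := ht
  have h1t : 0 < 1 - t := by linarith
  have h1 : a - (a + b) * t ≤ a * (-Real.log t) - a * (-Real.log (a / (a + b))) := by
    rcases eq_or_lt_of_le ha with h0 | h0
    · rw [← h0]; simp; nlinarith
    · have hab : (0:ℝ) < a + b := by linarith
      have key := klterm_ge a ((a + b) * t) ha (by positivity) (fun _ => by positivity)
      have hrw : Real.log (a / ((a + b) * t)) = Real.log (a/(a+b)) - Real.log t := by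
        rw [Real.log_div (ne_of_gt h0) (by positivity),
          Real.log_div (ne_of_gt h0) (ne_of_gt hab),
          Real.log_mul (ne_of_gt hab) (ne_of_gt ht0)]
        ring
      rw [hrw] at key
      nlinarith [key]
  have h2 : b - (a + b) * (1 - t) ≤ b * (-Real.log (1 - t)) - b * (-Real.log (b / (a + b))) := by
    rcases eq_or_lt_of_le hb with h0 | h0
    · rw [← h0]; simp; nlinarith
    · have hab : (0:ℝ) < a + b := by linarith
      have key := klterm_ge b ((a + b) * (1 - t)) hb (by positivity) (fun _ => by positivity)
      have hrw : Real.log (b / ((a + b) * (1 - t))) = Real.log (b/(a+b)) - Real.log (1 - t) := by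
        rw [Real.log_div (ne_of_gt h0) (by positivity),
          Real.log_div (ne_of_gt h0) (ne_of_gt hab),
          Real.log_mul (ne_of_gt hab) (ne_of_gt h1t)]
        ring
      rw [hrw] at key
      nlinarith [key]
  have hsum : (a + b) * t + (a + b) * (1 - t) = a + b := by ring
  linarith

lemma eps_point (a s ε : ℝ) (ha : 0 ≤ a) (has : a ≤ s) (hε : 0 < ε) :
    a * (-Real.log ((a + ε) / (s + 2*ε))) ≤ a * (-Real.log (a / s)) + 2*ε := by
  rcases eq_or_lt_of_le ha with h0 | h0
  · rw [← h0]; simp; linarith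
  · have hs0 : 0 < s := lt_of_lt_of_le h0 has
    have hden : (0:ℝ) < s + 2*ε := by linarith
    have step1 : -Real.log ((a+ε)/(s+2*ε)) ≤ -Real.log (a/(s+2*ε)) := by
      have hnum : a / (s+2*ε) ≤ (a+ε)/(s+2*ε) := by gcongr; linarith
      have := Real.log_le_log (div_pos h0 hden) hnum
      linarith
    have step2 : -Real.log (a/(s+2*ε)) = -Real.log (a/s) + Real.log ((s+2*ε)/s) := by
      rw [Real.log_div (ne_of_gt h0) (ne_of_gt hden),
        Real.log_div (ne_of_gt h0) (ne_of_gt hs0),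
        Real.log_div (ne_of_gt hden) (ne_of_gt hs0)]
      ring
    have step3 : Real.log ((s+2*ε)/s) ≤ 2*ε/s := by
      have h1 := Real.log_le_sub_one_of_pos (show (0:ℝ) < (s+2*ε)/s by positivity)
      have h2 : (s+2*ε)/s - 1 = 2*ε/s := by field_simp; ring
      linarith
    have step4 : a * (2*ε/s) ≤ 2*ε := by
      rw [mul_div_assoc']
      rw [div_le_iff₀ hs0]
      nlinarith
    have m1 : a * (-Real.log ((a + ε) / (s + 2*ε))) ≤ a * (-Real.log (a/(s+2*ε))) :=
      mul_le_mul_of_nonneg_left step1 ha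
    have m2 : a * (-Real.log (a/(s+2*ε))) = a * (-Real.log (a/s)) + a * Real.log ((s+2*ε)/s) := by
      rw [step2]; ring
    have m3 : a * Real.log ((s+2*ε)/s) ≤ a * (2*ε/s) := mul_le_mul_of_nonneg_left step3 ha
    linarith

lemma lam_point (a S : ℝ) (ha : 0 ≤ a) (haS : a ≤ S) :
    a * (-Real.log (a / S)) + a * Real.log (a / (S/2)) = a * Real.log 2 := by
  rcases eq_or_lt_of_le ha with h0 | h0
  · rw [← h0]; ring
  · have hS : 0 < S := lt_of_lt_of_le h0 haS
    have l1 : Real.log (a / S) = Real.log a - Real.log S :=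
      Real.log_div (ne_of_gt h0) (ne_of_gt hS)
    have l2 : Real.log (a / (S/2)) = Real.log a - (Real.log S - Real.log 2) := by
      rw [Real.log_div (ne_of_gt h0) (by positivity),
        Real.log_div (ne_of_gt hS) (two_ne_zero)]
    rw [l1, l2]; ring

theorem stmt_14 {𝒳 𝒴 Ω : Type*} [Fintype 𝒳] [Fintype 𝒴] [Fintype Ω]
    (p : 𝒳 → 𝒴 → ℝ) (hp0 : ∀ x y, 0 ≤ p x y) (hp1 : ∑ x, ∑ y, p x y = 1)
    (r : 𝒳 → 𝒴 → ℝ) (hr0 : ∀ x y, 0 ≤ r x y) (hr1 : ∀ x, ∑ y, r x y = 1)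
    (hrpos : ∀ x y, 0 < p x y → 0 < r x y)
    (P1 P2 : Ω → ℝ) (hP10 : ∀ ω, 0 ≤ P1 ω) (hP11 : ∑ ω, P1 ω = 1)
    (hP20 : ∀ ω, 0 ≤ P2 ω) (hP21 : ∑ ω, P2 ω = 1)
    (μ : ℝ) (hμ : μ ∈ Set.Ioo (0 : ℝ) 1)
    (heq : sSup {v : ℝ | ∃ D : Ω → ℝ, (∀ ω, D ω ∈ Set.Ioo (0 : ℝ) 1) ∧
          v = (1 - μ) * nllLoss p r - μ * discLoss P1 P2 D}
        = (1 - μ) * condEnt p - μ * Real.log 4) :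
    nllLoss p r = condEnt p ∧
    (∀ x, 0 < ∑ y', p x y' → ∀ y, r x y = p x y / ∑ y', p x y') ∧
    P1 = P2 := by
  obtain ⟨hμ0, hμ1⟩ := hμ
  set S : Set ℝ := {v : ℝ | ∃ D : Ω → ℝ, (∀ ω, D ω ∈ Set.Ioo (0 : ℝ) 1) ∧
      v = (1 - μ) * nllLoss p r - μ * discLoss P1 P2 D} with hSdef
  set Λ : ℝ := ∑ ω, (P1 ω * (-Real.log (P1 ω / (P1 ω + P2 ω)))
      + P2 ω * (-Real.log (P2 ω / (P1 ω + P2 ω)))) with hΛdef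
  -- every discriminator loss is at least Λ
  have hdiscΛ : ∀ D : Ω → ℝ, (∀ ω, D ω ∈ Set.Ioo (0:ℝ) 1) → Λ ≤ discLoss P1 P2 D := by
    intro D hD
    rw [hΛdef, discLoss, ← Finset.sum_add_distrib]
    exact Finset.sum_le_sum fun ω _ => disc_point _ _ _ (hP10 ω) (hP20 ω) (hD ω)
  have hbdd : BddAbove S := by
    refine ⟨(1-μ)*nllLoss p r - μ*Λ, ?_⟩
    rintro v ⟨D, hD, rfl⟩
    have h := hdiscΛ D hD
    nlinarith
  -- membership of the D = 1/2 value
  have hlog2 : -Real.log ((1:ℝ)/2) = Real.log 2 := by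
    rw [Real.log_div one_ne_zero two_ne_zero, Real.log_one]; ring
  have hlog4 : Real.log 4 = Real.log 2 + Real.log 2 := by
    rw [← Real.log_mul two_ne_zero two_ne_zero]; norm_num
  have hmem : ((1-μ)*nllLoss p r - μ*Real.log 4) ∈ S := by
    refine ⟨fun _ => 1/2, fun ω => ⟨by norm_num, by norm_num⟩, ?_⟩
    have hd : discLoss P1 P2 (fun _ => (1:ℝ)/2) = Real.log 4 := by
      simp only [discLoss]
      have h12 : (1:ℝ) - 1/2 = 1/2 := by norm_num
      rw [h12]
      simp only [hlog2, ← Finset.sum_mul, hP11, hP21]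
      rw [hlog4]; ring
    rw [hd]
  have hv0 : (1-μ)*nllLoss p r - μ*Real.log 4 ≤ (1-μ)*condEnt p - μ*Real.log 4 := by
    have := le_csSup hbdd hmem
    rwa [heq] at this
  have hLH : nllLoss p r ≤ condEnt p := by nlinarith
  -- Gibbs inequality per x
  have hps : ∀ x y, p x y ≤ ∑ y', p x y' :=
    fun x y => Finset.single_le_sum (fun y' _ => hp0 x y') (Finset.mem_univ y)
  have hginner : ∀ x, 0 ≤ ∑ y, p x y * Real.log (p x y / ((∑ y', p x y') * r x y)) := by
    intro x
    apply kl_sum_nonneg _ _ (hp0 x)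
      (fun y => mul_nonneg (Finset.sum_nonneg fun y' _ => hp0 x y') (hr0 x y))
      (fun y hy => mul_pos (lt_of_lt_of_le hy (hps x y)) (hrpos x y hy))
    rw [← Finset.mul_sum, hr1 x, mul_one]
  have hdiff : nllLoss p r - condEnt p
      = ∑ x, ∑ y, p x y * Real.log (p x y / ((∑ y', p x y') * r x y)) := by
    rw [nllLoss, condEnt, ← Finset.sum_sub_distrib]
    refine Finset.sum_congr rfl fun x _ => ?_
    rw [← Finset.sum_sub_distrib]
    refine Finset.sum_congr rfl fun y _ => ?_
    rcases eq_or_lt_of_le (hp0 x y) with h0 | h0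
    · rw [← h0]; ring
    · have hs : 0 < ∑ y', p x y' := lt_of_lt_of_le h0 (hps x y)
      have hr : 0 < r x y := hrpos x y h0
      have e1 : Real.log (p x y / ((∑ y', p x y') * r x y))
          = Real.log (p x y) - Real.log (∑ y', p x y') - Real.log (r x y) := by
        rw [Real.log_div (ne_of_gt h0) (by positivity),
          Real.log_mul (ne_of_gt hs) (ne_of_gt hr)]
        ring
      have e2 : Real.log (p x y / ∑ y', p x y')
          = Real.log (p x y) - Real.log (∑ y', p x y') :=
        Real.log_div (ne_of_gt h0) (ne_of_gt hs)
      rw [e1, e2]; ring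
  have hHL : condEnt p ≤ nllLoss p r := by
    have : 0 ≤ ∑ x, ∑ y, p x y * Real.log (p x y / ((∑ y', p x y') * r x y)) :=
      Finset.sum_nonneg fun x _ => hginner x
    linarith [hdiff]
  have hLeq : nllLoss p r = condEnt p := le_antisymm hLH hHL
  -- equality in Gibbs: each inner sum is 0
  have hzero : ∀ x ∈ Finset.univ,
      ∑ y, p x y * Real.log (p x y / ((∑ y', p x y') * r x y)) = 0 := by
    apply (Finset.sum_eq_zero_iff_of_nonneg (fun x _ => hginner x)).mp
    rw [← hdiff, hLeq]; ring
  have hpart2 : ∀ x, 0 < ∑ y', p x y' → ∀ y, r x y = p x y / ∑ y', p x y' := by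
    intro x hs y
    have := kl_sum_eq (p x) (fun y => (∑ y', p x y') * r x y) (hp0 x)
      (fun y => mul_nonneg (le_of_lt hs) (hr0 x y))
      (fun y hy => mul_pos hs (hrpos x y hy))
      (by rw [← Finset.mul_sum, hr1 x, mul_one])
      (hzero x (Finset.mem_univ x)) y
    rw [eq_div_iff (ne_of_gt hs)]
    linarith [this]
  -- part (b)
  have hdisc_ge4 : ∀ ε : ℝ, 0 < ε → Real.log 4 ≤ Λ + 4 * (Fintype.card Ω) * ε := by
    intro ε hε
    set D : Ω → ℝ := fun ω => (P1 ω + ε) / (P1 ω + P2 ω + 2*ε) with hDdef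
    have hden : ∀ ω, (0:ℝ) < P1 ω + P2 ω + 2*ε := fun ω => by
      have := hP10 ω; have := hP20 ω; linarith
    have hD : ∀ ω, D ω ∈ Set.Ioo (0:ℝ) 1 := by
      intro ω
      constructor
      · exact div_pos (by have := hP10 ω; linarith) (hden ω)
      · rw [div_lt_one (hden ω)]; have := hP20 ω; linarith
    have hmem' : ((1-μ)*nllLoss p r - μ*discLoss P1 P2 D) ∈ S := ⟨D, hD, rfl⟩
    have h1 := le_csSup hbdd hmem'
    rw [heq] at h1
    have hd4 : Real.log 4 ≤ discLoss P1 P2 D := by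
      rw [hLeq] at h1; nlinarith
    have h1mD : ∀ ω, 1 - D ω = (P2 ω + ε) / (P1 ω + P2 ω + 2*ε) := by
      intro ω
      have h := hden ω
      rw [hDdef]
      rw [sub_eq_iff_eq_add, ← add_div, eq_div_iff (ne_of_gt h), one_mul]
      ring
    have hub : discLoss P1 P2 D ≤ Λ + 4 * (Fintype.card Ω) * ε := by
      rw [discLoss, hΛdef, ← Finset.sum_add_distrib]
      have : (4 * (Fintype.card Ω : ℝ) * ε) = ∑ _ω : Ω, (2*ε + 2*ε) := by
        rw [Finset.sum_const, Finset.card_univ]; push_cast; ring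
      rw [this, ← Finset.sum_add_distrib]
      refine Finset.sum_le_sum fun ω _ => ?_
      have e1 : P1 ω * (-Real.log (D ω))
          ≤ P1 ω * (-Real.log (P1 ω / (P1 ω + P2 ω))) + 2*ε := by
        have := eps_point (P1 ω) (P1 ω + P2 ω) ε (hP10 ω) (by have := hP20 ω; linarith) hε
        rw [hDdef]
        exact this
      have e2 : P2 ω * (-Real.log (1 - D ω))
          ≤ P2 ω * (-Real.log (P2 ω / (P1 ω + P2 ω))) + 2*ε := by
        rw [h1mD ω]
        have := eps_point (P2 ω) (P1 ω + P2 ω) ε (hP20 ω) (by have := hP10 ω; linarith) hε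
        exact this
      linarith
    linarith
  have hΛ4 : Real.log 4 ≤ Λ := by
    by_contra hcon
    push_neg at hcon
    set c := Real.log 4 - Λ with hcdef
    have hc : 0 < c := by simp [hcdef]; linarith
    set K := 4 * (Fintype.card Ω : ℝ) with hKdef
    have hK : 0 ≤ K := by positivity
    have h := hdisc_ge4 (c / (K + 1)) (by positivity)
    have hKc : K * (c / (K+1)) < c := by
      rw [mul_div_assoc', div_lt_iff₀ (by positivity)]
      nlinarith
    linarith
  -- JSD decomposition
  have hkey : Λ + (∑ ω, P1 ω * Real.log (P1 ω / ((P1 ω + P2 ω)/2)))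
      + (∑ ω, P2 ω * Real.log (P2 ω / ((P1 ω + P2 ω)/2))) = Real.log 4 := by
    rw [hΛdef, ← Finset.sum_add_distrib, ← Finset.sum_add_distrib]
    have : ∀ ω ∈ Finset.univ,
        P1 ω * (-Real.log (P1 ω / (P1 ω + P2 ω))) + P2 ω * (-Real.log (P2 ω / (P1 ω + P2 ω)))
          + P1 ω * Real.log (P1 ω / ((P1 ω + P2 ω)/2)) + P2 ω * Real.log (P2 ω / ((P1 ω + P2 ω)/2))
          = P1 ω * Real.log 2 + P2 ω * Real.log 2 := by
      intro ω _
      have l1 := lam_point (P1 ω) (P1 ω + P2 ω) (hP10 ω) (by have := hP20 ω; linarith)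
      have l2 := lam_point (P2 ω) (P1 ω + P2 ω) (hP20 ω) (by have := hP10 ω; linarith)
      have hcomm : P2 ω / (P2 ω + P1 ω) = P2 ω / (P1 ω + P2 ω) := by rw [add_comm]
      linarith
    rw [Finset.sum_congr rfl this, Finset.sum_add_distrib, ← Finset.sum_mul, ← Finset.sum_mul,
      hP11, hP21, hlog4]
    ring
  have hm0 : ∀ ω, 0 ≤ (P1 ω + P2 ω)/2 := fun ω => by
    have := hP10 ω; have := hP20 ω; linarith
  have hmsum : ∑ ω, (P1 ω + P2 ω)/2 = 1 := by
    have : ∑ ω, (P1 ω + P2 ω)/2 = (∑ ω, P1 ω + ∑ ω, P2 ω)/2 := by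
      rw [← Finset.sum_add_distrib, ← Finset.sum_div]
    rw [this, hP11, hP21]; norm_num
  have hKL1 : 0 ≤ ∑ ω, P1 ω * Real.log (P1 ω / ((P1 ω + P2 ω)/2)) := by
    apply kl_sum_nonneg _ _ hP10 hm0 (fun ω hω => by have := hP20 ω; positivity)
    rw [hmsum, hP11]
  have hKL2 : 0 ≤ ∑ ω, P2 ω * Real.log (P2 ω / ((P1 ω + P2 ω)/2)) := by
    apply kl_sum_nonneg _ _ hP20 hm0 (fun ω hω => by have := hP10 ω; positivity)
    rw [hmsum, hP21]
  have hKL1z : ∑ ω, P1 ω * Real.log (P1 ω / ((P1 ω + P2 ω)/2)) = 0 := by linarith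
  have hP1m := kl_sum_eq P1 (fun ω => (P1 ω + P2 ω)/2) hP10 hm0
    (fun ω hω => by have := hP20 ω; positivity) (by rw [hmsum, hP11]) hKL1z
  refine ⟨hLeq, hpart2, funext fun ω => ?_⟩
  have := hP1m ω
  linarith
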